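/- arXiv:1704.01360 — 2 statements merged into one kernel-verified Lean document; each statement's English description precedes it below -/
import Mathlib

section
/- For every γ ∈ [0,1], the function φ(t) = sin(γt)/sin t is nondecreasing on (0, π/2]; that is, for all s, t with 0 < s ≤ t ≤ π/2, one has sin(γs)/sin s ≤ sin(γt)/sin t. -/
open Real

lemma aux_hasDerivAt (γ x : ℝ) :
    HasDerivAt (fun y => γ * Real.cos (γ * y) * Real.sin y - Real.sin (γ * y) * Real.cos y)
      ((1 - γ ^ 2) * (Real.sin (γ * x) * Real.sin x)) x := by
  have hid : HasDerivAt (fun y : ℝ => γ * y) γ x := by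
    simpa using (hasDerivAt_id x).const_mul γ
  have hcos : HasDerivAt (fun y => Real.cos (γ * y)) (-Real.sin (γ * x) * γ) x :=
    (Real.hasDerivAt_cos (γ * x)).comp x hid
  have hsin : HasDerivAt (fun y => Real.sin (γ * y)) (Real.cos (γ * x) * γ) x :=
    (Real.hasDerivAt_sin (γ * x)).comp x hid
  have h1 : HasDerivAt (fun y => γ * Real.cos (γ * y) * Real.sin y)
      ((γ * (-Real.sin (γ * x) * γ)) * Real.sin x + γ * Real.cos (γ * x) * Real.cos x) x :=
    ((hcos.const_mul γ).mul (Real.hasDerivAt_sin x))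
  have h2 : HasDerivAt (fun y => Real.sin (γ * y) * Real.cos y)
      ((Real.cos (γ * x) * γ) * Real.cos x + Real.sin (γ * x) * (-Real.sin x)) x :=
    hsin.mul (Real.hasDerivAt_cos x)
  have := h1.sub h2
  refine this.congr_deriv ?_
  ring

lemma aux_ineq (γ : ℝ) (hγ0 : 0 ≤ γ) (hγ1 : γ ≤ 1) (x : ℝ) (hx0 : 0 ≤ x)
    (hx : x ≤ π / 2) :
    Real.sin (γ * x) * Real.cos x ≤ γ * Real.cos (γ * x) * Real.sin x := by
  set g : ℝ → ℝ := fun y => γ * Real.cos (γ * y) * Real.sin y - Real.sin (γ * y) * Real.cos y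
    with hg
  have hmono : MonotoneOn g (Set.Icc 0 (π / 2)) := by
    apply monotoneOn_of_deriv_nonneg (convex_Icc _ _)
    · exact fun y _ => ((aux_hasDerivAt γ y).continuousAt).continuousWithinAt
    · intro y hy
      exact ((aux_hasDerivAt γ y).differentiableAt).differentiableWithinAt
    · intro y hy
      rw [interior_Icc] at hy
      rw [(aux_hasDerivAt γ y).deriv]
      have hy0 : 0 < y := hy.1
      have hy2 : y < π / 2 := hy.2
      have h1 : 0 ≤ Real.sin (γ * y) := by
        apply Real.sin_nonneg_of_nonneg_of_le_pi
        · positivity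
        · nlinarith [Real.pi_pos]
      have h2 : 0 ≤ Real.sin y := by
        apply Real.sin_nonneg_of_nonneg_of_le_pi hy0.le
        nlinarith [Real.pi_pos]
      exact mul_nonneg (by nlinarith) (mul_nonneg h1 h2)
  have h0 : g 0 ≤ g x := by
    apply hmono
    · exact ⟨le_refl 0, by positivity⟩
    · exact ⟨hx0, hx⟩
    · exact hx0
  simp only [hg, mul_zero, Real.sin_zero, Real.cos_zero, mul_one, zero_mul, sub_zero,
    mul_zero, zero_sub, sub_nonneg] at h0
  linarith [h0]

/-- For `γ ∈ [0,1]`, the function `t ↦ sin (γ t) / sin t` is nondecreasing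
on `(0, π/2]`. -/
theorem stmt_9 (γ : ℝ) (hγ : γ ∈ Set.Icc (0 : ℝ) 1)
    (s t : ℝ) (hs : 0 < s) (hst : s ≤ t) (ht : t ≤ π / 2) :
    Real.sin (γ * s) / Real.sin s ≤ Real.sin (γ * t) / Real.sin t := by
  obtain ⟨hγ0, hγ1⟩ := hγ
  have hpi : 0 < π := Real.pi_pos
  have hsinpos : ∀ x ∈ Set.Icc s t, 0 < Real.sin x := by
    intro x hx
    apply Real.sin_pos_of_pos_of_lt_pi (lt_of_lt_of_le hs hx.1)
    calc x ≤ π / 2 := le_trans hx.2 ht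
    _ < π := by linarith
  have hmono : MonotoneOn (fun x => Real.sin (γ * x) / Real.sin x) (Set.Icc s t) := by
    apply monotoneOn_of_deriv_nonneg (convex_Icc _ _)
    · apply ContinuousOn.div
      · exact (Real.continuous_sin.comp (continuous_const.mul continuous_id)).continuousOn
      · exact Real.continuous_sin.continuousOn
      · exact fun x hx => (hsinpos x hx).ne'
    · intro x hx
      rw [interior_Icc] at hx
      have hxI : x ∈ Set.Icc s t := ⟨hx.1.le, hx.2.le⟩
      have hne : Real.sin x ≠ 0 := (hsinpos x hxI).ne'
      have hid : HasDerivAt (fun y : ℝ => γ * y) γ x := by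
        simpa using (hasDerivAt_id x).const_mul γ
      have hsin : HasDerivAt (fun y => Real.sin (γ * y)) (Real.cos (γ * x) * γ) x :=
        (Real.hasDerivAt_sin (γ * x)).comp x hid
      exact ((hsin.div (Real.hasDerivAt_sin x) hne).differentiableAt).differentiableWithinAt
    · intro x hx
      rw [interior_Icc] at hx
      have hxI : x ∈ Set.Icc s t := ⟨hx.1.le, hx.2.le⟩
      have hpos := hsinpos x hxI
      have hne : Real.sin x ≠ 0 := hpos.ne'
      have hid : HasDerivAt (fun y : ℝ => γ * y) γ x := by
        simpa using (hasDerivAt_id x).const_mul γ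
      have hsin : HasDerivAt (fun y => Real.sin (γ * y)) (Real.cos (γ * x) * γ) x :=
        (Real.hasDerivAt_sin (γ * x)).comp x hid
      have hder := (hsin.div (Real.hasDerivAt_sin x) hne).deriv
      rw [show (fun x => Real.sin (γ * x) / Real.sin x) = ((fun y => Real.sin (γ * y)) / Real.sin) from rfl, hder]
      have hx0 : 0 ≤ x := (hs.trans_le hx.1.le).le
      have hx2 : x ≤ π / 2 := hx.2.le.trans ht
      have key := aux_ineq γ hγ0 hγ1 x hx0 hx2
      apply div_nonneg
      · nlinarith
      · positivity
  exact hmono ⟨le_refl s, hst⟩ ⟨hst, le_refl t⟩ hst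
end

section
/- Let {a_n}, {b_n}, and {c_n} be sequences in [0, π/2] such that cos(c_n)·cos(a_n) ≥ cos(b_n) for all n ∈ ℕ, lim_n (cos(a_n) - cos(b_n)) = 0, and sup_n b_n < π/2. Then lim_n c_n = 0. -/
open Filter Real

/-- If `a b c` are sequences in `[0, π/2]` with `cos (c n) * cos (a n) ≥ cos (b n)`,
`cos (a n) - cos (b n) → 0`, and `sup_n b_n < π/2`, then `c n → 0`. -/
theorem stmt_15 (a b c : ℕ → ℝ)
    (ha : ∀ n, a n ∈ Set.Icc (0 : ℝ) (π / 2))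
    (hb : ∀ n, b n ∈ Set.Icc (0 : ℝ) (π / 2))
    (hc : ∀ n, c n ∈ Set.Icc (0 : ℝ) (π / 2))
    (hfirm : ∀ n, Real.cos (b n) ≤ Real.cos (c n) * Real.cos (a n))
    (hlim : Tendsto (fun n => Real.cos (a n) - Real.cos (b n)) atTop (nhds 0))
    (hsup : iSup b < π / 2) :
    Tendsto c atTop (nhds 0) := by
  have hbdd : BddAbove (Set.range b) := ⟨π / 2, by rintro _ ⟨n, rfl⟩; exact (hb n).2⟩
  have hble : ∀ n, b n ≤ iSup b := fun n => le_ciSup hbdd n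
  have hsup0 : (0 : ℝ) ≤ iSup b := le_trans (hb 0).1 (hble 0)
  set ε := Real.cos (iSup b) with hε
  have hεpos : 0 < ε := Real.cos_pos_of_mem_Ioo ⟨by linarith [Real.pi_pos], hsup⟩
  have hcosb : ∀ n, ε ≤ Real.cos (b n) := fun n =>
    Real.cos_le_cos_of_nonneg_of_le_pi (hb n).1 (by linarith [Real.pi_pos, hble n]) (hble n)
  have hcosa_le : ∀ n, Real.cos (a n) ≤ 1 := fun n => Real.cos_le_one _
  have hcosc_le : ∀ n, Real.cos (c n) ≤ 1 := fun n => Real.cos_le_one _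
  have hcosc_nn : ∀ n, 0 ≤ Real.cos (c n) := fun n =>
    Real.cos_nonneg_of_mem_Icc ⟨by linarith [(hc n).1, Real.pi_pos], (hc n).2⟩
  have hcosa_nn : ∀ n, 0 ≤ Real.cos (a n) := fun n =>
    Real.cos_nonneg_of_mem_Icc ⟨by linarith [(ha n).1, Real.pi_pos], (ha n).2⟩
  have hcosa_ge : ∀ n, ε ≤ Real.cos (a n) := by
    intro n
    nlinarith [hfirm n, hcosb n, hcosc_le n, hcosa_nn n]
  -- lower bound: cos c n ≥ 1 - (cos a n - cos b n)/ε
  have hlow : ∀ n, 1 - (Real.cos (a n) - Real.cos (b n)) / ε ≤ Real.cos (c n) := by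
    intro n
    rw [sub_le_comm, le_div_iff₀ hεpos]
    nlinarith [hfirm n, hcosa_ge n, hcosc_le n, hcosc_nn n]
  have hcosc_lim : Tendsto (fun n => Real.cos (c n)) atTop (nhds 1) := by
    have h1 : Tendsto (fun n => 1 - (Real.cos (a n) - Real.cos (b n)) / ε) atTop (nhds 1) := by
      have := (hlim.div_const ε).const_sub 1
      simpa using this
    exact tendsto_of_tendsto_of_tendsto_of_le_of_le h1 tendsto_const_nhds hlow hcosc_le
  have harc : Tendsto (fun n => Real.arccos (Real.cos (c n))) atTop (nhds 0) := by
    have := (Real.continuous_arccos.continuousAt (x := (1:ℝ))).tendsto.comp hcosc_lim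
    simpa [Real.arccos_one, Function.comp_def] using this
  have : (fun n => Real.arccos (Real.cos (c n))) = c := by
    funext n
    exact Real.arccos_cos (hc n).1 (by linarith [(hc n).2, Real.pi_pos])
  rwa [this] at harc
end
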